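/- Let p > 1, let α, β > 0 and γ ≤ 0, and let f : ℝ → ℝ be continuously differentiable with f(x) > 0 for all x ≥ 0. Assume that for all x ≥ 0, f'(x) ≥ α · ∫₀ˣ f(y)^{(1-p)/2} dy - β·√(f(x)) - γ, and that f(0) < (α/β²)^{2/(p-1)}. Then inf_{x > 0} f(x) ≥ f(0)/4. -/

import Mathlib

open MeasureTheory Real

noncomputable section

/-- If `a` is a minimum from the left and `f` is differentiable at `a`, then `deriv f a ≤ 0`. -/
lemma deriv_nonpos_of_left_min {f : ℝ → ℝ} {a b : ℝ} (hd : DifferentiableAt ℝ f a)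
    (hb : b < a) (h : ∀ y, b < y → y < a → f a ≤ f y) : deriv f a ≤ 0 := by
  have H : HasDerivWithinAt f (deriv f a) (Set.Iio a) a := hd.hasDerivAt.hasDerivWithinAt
  rw [hasDerivWithinAt_iff_tendsto_slope] at H
  have hset : Set.Iio a \ {a} = Set.Iio a := by
    apply Set.diff_singleton_eq_self; simp
  rw [hset] at H
  refine le_of_tendsto H ?_
  filter_upwards [Ioo_mem_nhdsLT_of_mem (Set.mem_Ioc.2 ⟨hb, le_refl a⟩)] with y hy
  rw [slope_def_field]
  apply div_nonpos_of_nonneg_of_nonpos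
  · linarith [h y hy.1 hy.2]
  · linarith [hy.2]

set_option maxHeartbeats 1000000 in
theorem no_return_to_small_values (p α β γ : ℝ) (hp : 1 < p)
    (hα : 0 < α) (hβ : 0 < β) (hγ : γ ≤ 0)
    (f : ℝ → ℝ) (hf : ContDiff ℝ 1 f)
    (hfpos : ∀ x : ℝ, 0 ≤ x → 0 < f x)
    (hineq : ∀ x : ℝ, 0 ≤ x →
      deriv f x ≥ α * (∫ y in (0 : ℝ)..x, f y ^ ((1 - p) / 2)) - β * Real.sqrt (f x) - γ)
    (h0 : f 0 < (α / β ^ 2) ^ ((2 : ℝ) / (p - 1))) :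
    ∀ x : ℝ, 0 < x → f 0 / 4 ≤ f x := by
  intro x hx
  by_contra hcon
  push_neg at hcon
  set F := f 0 with hF
  have hFpos : 0 < F := hfpos 0 le_rfl
  have hcont : Continuous f := hf.continuous
  have hdiff : ∀ y : ℝ, DifferentiableAt ℝ f y := fun y => (hf.differentiable one_ne_zero) y
  -- x₀ : first point where f ≤ F/4
  set S : Set ℝ := Set.Icc 0 x ∩ f ⁻¹' Set.Iic (F / 4) with hS
  have hSclosed : IsClosed S := isClosed_Icc.inter (isClosed_Iic.preimage hcont)
  have hSne : S.Nonempty := ⟨x, ⟨hx.le, le_rfl⟩, hcon.le⟩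
  have hSbdd : BddBelow S := ⟨0, fun y hy => hy.1.1⟩
  set x₀ : ℝ := sInf S with hx₀
  have hx₀S : x₀ ∈ S := hSclosed.csInf_mem hSne hSbdd
  have hx₀0 : 0 ≤ x₀ := hx₀S.1.1
  have hfx₀ : f x₀ ≤ F / 4 := hx₀S.2
  have hx₀pos : 0 < x₀ := by
    rcases hx₀0.lt_or_eq with h | h
    · exact h
    · exfalso; rw [← h] at hfx₀; simp only [← hF] at hfx₀; linarith
  have hmin : ∀ y, 0 ≤ y → y < x₀ → F / 4 < f y := by
    intro y hy hylt
    by_contra hle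
    push_neg at hle
    have : y ∈ S := ⟨⟨hy, hylt.le.trans hx₀S.1.2⟩, hle⟩
    exact absurd (csInf_le hSbdd this) (not_le.2 hylt)
  -- x₁ : last point before x₀ where f ≥ F
  set A : Set ℝ := Set.Icc 0 x₀ ∩ f ⁻¹' Set.Ici F with hA
  have hAclosed : IsClosed A := isClosed_Icc.inter (isClosed_Ici.preimage hcont)
  have hAne : A.Nonempty := ⟨0, ⟨le_rfl, hx₀0⟩, hF.le⟩
  have hAbdd : BddAbove A := ⟨x₀, fun y hy => hy.1.2⟩
  set x₁ : ℝ := sSup A with hx₁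
  have hx₁A : x₁ ∈ A := hAclosed.csSup_mem hAne hAbdd
  have hx₁0 : 0 ≤ x₁ := hx₁A.1.1
  have hx₁le : x₁ ≤ x₀ := hx₁A.1.2
  have hfx₁ : F ≤ f x₁ := hx₁A.2
  have hx₁lt : x₁ < x₀ := by
    rcases hx₁le.lt_or_eq with h | h
    · exact h
    · exfalso; rw [h] at hfx₁; linarith
  have hupper : ∀ y, x₁ < y → y ≤ x₀ → f y < F := by
    intro y hy1 hy2
    by_contra hle
    push_neg at hle
    have : y ∈ A := ⟨⟨hx₁0.trans hy1.le, hy2⟩, hle⟩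
    exact absurd (le_csSup hAbdd this) (not_le.2 hy1)
  have hfx₁eq : f x₁ = F := by
    refine le_antisymm ?_ hfx₁
    have htend : Filter.Tendsto f (nhdsWithin x₁ (Set.Ioi x₁)) (nhds (f x₁)) :=
      (hcont.continuousAt).continuousWithinAt.tendsto
    refine le_of_tendsto htend ?_
    filter_upwards [Ioc_mem_nhdsGT_of_mem (Set.mem_Ico.2 ⟨le_refl x₁, hx₁lt⟩)] with y hy
    exact (hupper y hy.1 hy.2).le
  -- bound on f between x₁ and x₀
  have hfub : ∀ y ∈ Set.Icc x₁ x₀, f y ≤ F := by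
    intro y hy
    rcases hy.1.lt_or_eq with h | h
    · exact (hupper y h hy.2).le
    · rw [← h, hfx₁eq]
  clear_value x₀ x₁
  clear hx₀ hx₁ hx₀S hx₁A hSne hSbdd hAne hAbdd hSclosed hAclosed hS hA
  clear_value S A
  clear S A
  clear_value F
  -- MVT on [x₁, x₀]
  obtain ⟨ξ, hξmem, hξslope⟩ := exists_deriv_eq_slope f hx₁lt
    (hcont.continuousOn) (fun y _ => (hdiff y).differentiableWithinAt)
  have hξ0 : 0 ≤ ξ := hx₁0.trans hξmem.1.le
  have hsqF : Real.sqrt F ^ 2 = F := Real.sq_sqrt hFpos.le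
  have hsqFpos : 0 < Real.sqrt F := Real.sqrt_pos.2 hFpos
  -- lower bound on deriv f ξ
  have hint_nonneg : 0 ≤ ∫ y in (0:ℝ)..ξ, f y ^ ((1 - p) / 2) := by
    apply intervalIntegral.integral_nonneg hξ0
    intro u hu
    exact Real.rpow_nonneg (hfpos u hu.1).le _
  have hsqξ : Real.sqrt (f ξ) ≤ Real.sqrt F := by
    apply Real.sqrt_le_sqrt
    exact hfub ξ ⟨hξmem.1.le, hξmem.2.le⟩
  have hderivξ : -(β * Real.sqrt F) ≤ deriv f ξ := by
    have := hineq ξ hξ0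
    nlinarith [hsqξ]
  -- length lower bound : 3F/4 ≤ β √F (x₀ - x₁)
  have hlenpos : 0 < x₀ - x₁ := by linarith
  have hlen : 3 * F / 4 ≤ β * Real.sqrt F * (x₀ - x₁) := by
    rw [hξslope, le_div_iff₀ hlenpos] at hderivξ
    nlinarith [hfx₀, hfx₁eq]
  -- deriv at x₀ is nonpositive
  have hd0 : deriv f x₀ ≤ 0 := by
    apply deriv_nonpos_of_left_min (hdiff x₀) (show (0:ℝ) < x₀ from hx₀pos)
    intro y hy hylt
    exact hfx₀.trans (hmin y hy.le hylt).le
  -- integral lower bound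
  have hcont_on : ∀ a b : ℝ, 0 ≤ a → a ≤ b → b ≤ x₀ →
      IntervalIntegrable (fun y => f y ^ ((1 - p) / 2)) volume a b := by
    intro a b ha hab hbx
    apply ContinuousOn.intervalIntegrable
    apply ContinuousOn.rpow_const (hcont.continuousOn)
    intro y hy
    rw [Set.uIcc_of_le hab] at hy
    exact Or.inl (ne_of_gt (hfpos y (ha.trans hy.1)))
  have hi1 : IntervalIntegrable (fun y => f y ^ ((1 - p) / 2)) volume 0 x₁ :=
    hcont_on 0 x₁ le_rfl hx₁0 hx₁le
  have hi2 : IntervalIntegrable (fun y => f y ^ ((1 - p) / 2)) volume x₁ x₀ :=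
    hcont_on x₁ x₀ hx₁0 hx₁lt.le le_rfl
  have hsplit : (∫ y in (0:ℝ)..x₁, f y ^ ((1 - p) / 2))
      + (∫ y in x₁..x₀, f y ^ ((1 - p) / 2)) = ∫ y in (0:ℝ)..x₀, f y ^ ((1 - p) / 2) :=
    intervalIntegral.integral_add_adjacent_intervals hi1 hi2
  have hI1nonneg : 0 ≤ ∫ y in (0:ℝ)..x₁, f y ^ ((1 - p) / 2) := by
    apply intervalIntegral.integral_nonneg hx₁0
    intro u hu
    exact Real.rpow_nonneg (hfpos u hu.1).le _
  have hI2 : (x₀ - x₁) * F ^ ((1 - p) / 2) ≤ ∫ y in x₁..x₀, f y ^ ((1 - p) / 2) := by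
    have hmono := intervalIntegral.integral_mono_on hx₁lt.le
      (intervalIntegrable_const (c := F ^ ((1 - p) / 2))) hi2 ?_
    · calc (x₀ - x₁) * F ^ ((1 - p) / 2)
          = ∫ _ in x₁..x₀, F ^ ((1 - p) / 2) := by
            rw [intervalIntegral.integral_const]; simp [smul_eq_mul]
        _ ≤ _ := hmono
    · intro y hy
      exact Real.rpow_le_rpow_of_nonpos (hfpos y (hx₁0.trans hy.1)) (hfub y hy)
        (by linarith : (1 - p) / 2 ≤ 0)
  have hIlb : (x₀ - x₁) * F ^ ((1 - p) / 2) ≤ ∫ y in (0:ℝ)..x₀, f y ^ ((1 - p) / 2) := by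
    rw [← hsplit]; linarith
  -- inequality at x₀
  have hsqx₀ : Real.sqrt (f x₀) ≤ Real.sqrt F / 2 := by
    have h4 : Real.sqrt (F / 4) = Real.sqrt F / 2 := by
      rw [show F / 4 = F * (1 / 2) ^ 2 by ring, Real.sqrt_mul hFpos.le,
        Real.sqrt_sq (by norm_num : (0:ℝ) ≤ 1 / 2)]
      ring
    rw [← h4]
    exact Real.sqrt_le_sqrt hfx₀
  have hx₀ineq : α * ((x₀ - x₁) * F ^ ((1 - p) / 2)) ≤ β * (Real.sqrt F / 2) := by
    have h1 := hineq x₀ hx₀0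
    nlinarith [hsqx₀, hIlb, hd0]
  -- combine
  have hrpos : 0 < F ^ ((1 - p) / 2) := Real.rpow_pos_of_pos hFpos _
  set R : ℝ := F ^ ((1 - p) / 2) with hRdef
  set s : ℝ := Real.sqrt F with hsdef
  clear_value R s
  have h1 : (3 * F / 4) * (α * R) ≤ (β * s * (x₀ - x₁)) * (α * R) :=
    mul_le_mul_of_nonneg_right hlen (by positivity)
  have h2 : (β * s) * (α * ((x₀ - x₁) * R)) ≤ (β * s) * (β * (s / 2)) :=
    mul_le_mul_of_nonneg_left hx₀ineq (by positivity)
  have e : (β * s) * (β * (s / 2)) = β ^ 2 * F / 2 := by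
    have h : (β * s) * (β * (s / 2)) = β ^ 2 * s ^ 2 / 2 := by ring
    rw [h, hsqF]
  have h3 : (3 * F / 4) * (α * R) ≤ β ^ 2 * F / 2 := by
    calc (3 * F / 4) * (α * R) ≤ (β * s * (x₀ - x₁)) * (α * R) := h1
      _ = (β * s) * (α * ((x₀ - x₁) * R)) := by ring
      _ ≤ (β * s) * (β * (s / 2)) := h2
      _ = β ^ 2 * F / 2 := e
  have hkey : α * R ≤ β ^ 2 := by
    nlinarith [mul_pos (mul_pos hα hrpos) hFpos, h3, hFpos]
  have hXpos : 0 < F ^ ((p - 1) / 2) := Real.rpow_pos_of_pos hFpos _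
  have hFrpow : R * F ^ ((p - 1) / 2) = 1 := by
    rw [hRdef, ← Real.rpow_add hFpos, show (1 - p) / 2 + (p - 1) / 2 = 0 by ring,
      Real.rpow_zero]
  have hfinal : α / β ^ 2 ≤ F ^ ((p - 1) / 2) := by
    rw [div_le_iff₀ (by positivity)]
    calc α = α * R * F ^ ((p - 1) / 2) := by rw [mul_assoc, hFrpow, mul_one]
      _ ≤ β ^ 2 * F ^ ((p - 1) / 2) := mul_le_mul_of_nonneg_right hkey hXpos.le
      _ = F ^ ((p - 1) / 2) * β ^ 2 := mul_comm _ _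
  have hmono2 : (α / β ^ 2) ^ ((2:ℝ) / (p - 1)) ≤ (F ^ ((p - 1) / 2)) ^ ((2:ℝ) / (p - 1)) :=
    Real.rpow_le_rpow (by positivity) hfinal
      (le_of_lt (div_pos two_pos (by linarith)))
  have hcollapse : (F ^ ((p - 1) / 2)) ^ ((2:ℝ) / (p - 1)) = F := by
    rw [← Real.rpow_mul hFpos.le]
    have hpne : p - 1 ≠ 0 := ne_of_gt (by linarith)
    rw [show (p - 1) / 2 * (2 / (p - 1)) = 1 by field_simp, Real.rpow_one]
  rw [hcollapse] at hmono2
  linarith
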